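/- Let C₁ and C₂ be two vertex-disjoint cycles in a graph G with |C₂| ≥ 6. If C₂ contains two vertices u, v with at least 5 and at least 3 neighbors on C₁ respectively, then G[V(C₁) ∪ V(C₂)] contains two vertex-disjoint cycles C₁′, C₂′ with |C₁′| + |C₂′| < |C₁| + |C₂|. -/

import Mathlib

namespace SimpleGraph.Walk
variable {V : Type*} {G : SimpleGraph V} [DecidableEq V]

lemma takeUntil_cons' {a c b z : V} (h : G.Adj a c) (p : G.Walk c b)
    (hz : z ∈ p.support) (ha : a ≠ z) :
    (cons h p).takeUntil z (by simp [hz]) = cons h (p.takeUntil z hz) := by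
  simp [takeUntil, ha]

lemma takeUntil_start {v b : V} (p : G.Walk v b) (hz : v ∈ p.support) :
    p.takeUntil v hz = nil := by
  cases p with
  | nil => rfl
  | cons h q => simp [takeUntil]

lemma takeUntil_congr {v w z : V} {p q : G.Walk v w} (h : p = q) (hz : z ∈ p.support) :
    p.takeUntil z hz = q.takeUntil z (h ▸ hz) := by subst h; rfl

lemma append_takeUntil {a x b z : V} (p : G.Walk a x) (q : G.Walk x b)
    (hz : z ∈ q.support) (hz' : z ∉ p.support) :
    (p.append q).takeUntil z (by simp [mem_support_append_iff, hz]) =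
      p.append (q.takeUntil z hz) := by
  induction p with
  | nil => simp
  | cons h p ih =>
    rename_i u' a' c'
    have ha : u' ≠ z := fun e => hz' (by simp [e])
    have hz'' : z ∉ p.support := fun e => hz' (by simp [e])
    calc ((cons h p).append q).takeUntil z (by simp [mem_support_append_iff, hz])
        = (cons h (p.append q)).takeUntil z (by simp [mem_support_append_iff, hz]) :=
          takeUntil_congr (by rw [cons_append]) _
      _ = cons h ((p.append q).takeUntil z (by simp [mem_support_append_iff, hz])) :=
          takeUntil_cons' h _ (by simp [mem_support_append_iff, hz]) ha
      _ = cons h (p.append (q.takeUntil z hz)) := by rw [ih q hz hz'']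
      _ = (cons h p).append (q.takeUntil z hz) := by rw [cons_append]

lemma takeUntil_takeUntil' {v w x z : V} (p : G.Walk v w) (hx : x ∈ p.support)
    (hz : z ∈ (p.takeUntil x hx).support) :
    (p.takeUntil x hx).takeUntil z hz = p.takeUntil z (support_takeUntil_subset _ _ hz) := by
  induction p with
  | nil =>
    have hxv := (mem_support_nil_iff).mp hx
    subst hxv
    have e : Walk.nil.takeUntil x hx = nil := takeUntil_start _ _
    have hz2 : z = x := by
      have := hz; rw [e] at this; simpa using this
    subst hz2
    exact takeUntil_congr e hz
  | cons h p ih =>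
    rename_i a c b
    by_cases hva : a = z
    · subst hva
      calc ((cons h p).takeUntil x hx).takeUntil a hz = nil := takeUntil_start _ _
        _ = (cons h p).takeUntil a (support_takeUntil_subset _ _ hz) :=
          (takeUntil_start _ _).symm
    · by_cases hvx : a = x
      · subst hvx
        have e : (cons h p).takeUntil a hx = nil := takeUntil_start _ _
        have hz2 : z = a := by
          have := hz; rw [e] at this; simpa using this
        exact absurd hz2.symm hva
      · have hx' : x ∈ p.support := by
          have := hx; rw [support_cons, List.mem_cons] at this; tauto
        have e1 : (cons h p).takeUntil x hx = cons h (p.takeUntil x hx') :=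
          takeUntil_cons' h p hx' hvx
        have hz2 : z ∈ (p.takeUntil x hx').support := by
          have := hz; rw [e1] at this
          rw [support_cons, List.mem_cons] at this
          rcases this with h' | h'
          · exact absurd h'.symm hva
          · exact h'
        have hz3 : z ∈ p.support := support_takeUntil_subset _ _ hz2
        calc ((cons h p).takeUntil x hx).takeUntil z hz
            = (cons h (p.takeUntil x hx')).takeUntil z (e1 ▸ hz) := takeUntil_congr e1 hz
          _ = cons h ((p.takeUntil x hx').takeUntil z hz2) := takeUntil_cons' h _ hz2 hva
          _ = cons h (p.takeUntil z hz3) := by rw [ih hx' hz2]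
          _ = (cons h p).takeUntil z (support_takeUntil_subset _ _ hz) :=
            (takeUntil_cons' h p hz3 hva).symm
variable {V : Type*} {G : SimpleGraph V} [DecidableEq V]

-- PL1
lemma length_takeUntil_add_dropUntil {v w x : V} (p : G.Walk v w) (hx : x ∈ p.support) :
    (p.takeUntil x hx).length + (p.dropUntil x hx).length = p.length := by
  have := congr_arg Walk.length (p.take_spec hx)
  rwa [length_append] at this

-- aux: end in tail of support for nonnil
lemma end_mem_tail_support' {s t : V} (q : G.Walk s t) (h : q.length ≠ 0) :
    t ∈ q.support.tail := by
  cases q with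
  | nil => simp at h
  | cons h' r => simpa using r.end_mem_support

-- PL2: position of the endpoint of a path is its length
lemma length_takeUntil_end {v y : V} {p : G.Walk v y} (hp : p.IsPath) (hy : y ∈ p.support) :
    (p.takeUntil y hy).length = p.length := by
  have key : (p.dropUntil y hy).length = 0 := by
    by_contra h0
    have hnodup := hp.support_nodup
    have e := p.take_spec hy
    have hsup : p.support = (p.takeUntil y hy).support ++ (p.dropUntil y hy).support.tail := by
      conv_lhs => rw [← e]
      rw [support_append]
    rw [hsup] at hnodup
    have hdisj := List.disjoint_of_nodup_append hnodup
    exact hdisj (p.takeUntil y hy).end_mem_support (end_mem_tail_support' _ h0)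
  have := length_takeUntil_add_dropUntil p hy
  omega

-- PL3: strict bound for non-endpoint
lemma length_takeUntil_lt' {v y x : V} (p : G.Walk v y) (hx : x ∈ p.support) (hxy : x ≠ y) :
    (p.takeUntil x hx).length < p.length := by
  have h1 := length_takeUntil_add_dropUntil p hx
  have h2 : (p.dropUntil x hx).length ≠ 0 := fun h => hxy (eq_of_length_eq_zero h)
  omega

-- PL4b
lemma lt_length_takeUntil_of_not_mem {v y x z : V} (p : G.Walk v y) (hx : x ∈ p.support)
    (hz : z ∈ p.support) (hzn : z ∉ (p.takeUntil x hx).support) :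
    (p.takeUntil x hx).length < (p.takeUntil z hz).length := by
  have hzx : z ≠ x := fun e => hzn (e ▸ (p.takeUntil x hx).end_mem_support)
  have hzdrop : z ∈ (p.dropUntil x hx).support := by
    have e := p.take_spec hx
    have : z ∈ ((p.takeUntil x hx).append (p.dropUntil x hx)).support := by rw [e]; exact hz
    rw [mem_support_append_iff] at this
    tauto
  have e := (p.take_spec hx).symm
  have key := append_takeUntil (p.takeUntil x hx) (p.dropUntil x hx) hzdrop hzn
  have e2 : p.takeUntil z hz =
      (p.takeUntil x hx).append ((p.dropUntil x hx).takeUntil z hzdrop) := by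
    calc p.takeUntil z hz
        = ((p.takeUntil x hx).append (p.dropUntil x hx)).takeUntil z (e ▸ hz) :=
          takeUntil_congr e hz
      _ = _ := key
  have hpos : ((p.dropUntil x hx).takeUntil z hzdrop).length ≠ 0 := by
    intro h0
    exact hzx (eq_of_length_eq_zero h0).symm
  have := congr_arg Walk.length e2
  rw [length_append] at this
  omega

-- PL4
lemma mem_support_takeUntil_iff_le {v y x z : V} (p : G.Walk v y) (hx : x ∈ p.support)
    (hz : z ∈ p.support) :
    z ∈ (p.takeUntil x hx).support ↔
      (p.takeUntil z hz).length ≤ (p.takeUntil x hx).length := by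
  constructor
  · intro hmem
    have e := takeUntil_takeUntil' p hx hmem
    have : p.takeUntil z hz = (p.takeUntil x hx).takeUntil z hmem := by
      rw [e]
    rw [this]
    exact length_takeUntil_le _ _
  · intro hle
    by_contra hzn
    have := lt_length_takeUntil_of_not_mem p hx hz hzn
    omega

-- PL5: injectivity of position along a walk
lemma eq_of_length_takeUntil_eq {v y x z : V} (p : G.Walk v y) (hx : x ∈ p.support)
    (hz : z ∈ p.support)
    (h : (p.takeUntil z hz).length = (p.takeUntil x hx).length) : z = x := by
  have hmem : z ∈ (p.takeUntil x hx).support :=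
    (mem_support_takeUntil_iff_le p hx hz).mpr h.le
  have e := takeUntil_takeUntil' p hx hmem
  have e2 : ((p.takeUntil x hx).takeUntil z hmem).length = (p.takeUntil x hx).length := by
    rw [e]; exact h
  have h1 := length_takeUntil_add_dropUntil (p.takeUntil x hx) hmem
  have h0 : ((p.takeUntil x hx).dropUntil z hmem).length = 0 := by omega
  exact eq_of_length_eq_zero h0

-- PL6: support of dropUntil for a path
lemma mem_support_dropUntil_iff {v y x z : V} {p : G.Walk v y} (hp : p.IsPath)
    (hx : x ∈ p.support) (hz : z ∈ p.support) :
    z ∈ (p.dropUntil x hx).support ↔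
      (p.takeUntil x hx).length ≤ (p.takeUntil z hz).length := by
  have hnodup := hp.support_nodup
  have hsup : p.support = (p.takeUntil x hx).support ++ (p.dropUntil x hx).support.tail := by
    conv_lhs => rw [← p.take_spec hx]
    rw [support_append]
  constructor
  · intro hmem
    by_cases hzx : z = x
    · subst hzx; rfl
    · have hzn : z ∉ (p.takeUntil x hx).support := by
        intro hmem'
        have : z ∈ (p.dropUntil x hx).support.tail := by
          cases q : (p.dropUntil x hx) with
          | nil =>
            rw [q] at hmem; simp at hmem; exact absurd hmem hzx
          | cons h' r =>
            rw [q] at hmem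
            rcases (by simpa using hmem : z = x ∨ z ∈ r.support) with h'' | h''
            · exact absurd h'' hzx
            · simpa [q] using h''
        rw [hsup] at hnodup
        exact (List.disjoint_of_nodup_append hnodup) hmem' this
      exact (lt_length_takeUntil_of_not_mem p hx hz hzn).le
  · intro hle
    by_cases hzx : z = x
    · subst hzx; exact start_mem_support _
    · have hzn : z ∉ (p.takeUntil x hx).support := by
        intro hmem
        have := (mem_support_takeUntil_iff_le p hx hz).mp hmem
        have := eq_of_length_takeUntil_eq p hx hz (le_antisymm this hle)
        exact hzx this
      have : z ∈ (p.takeUntil x hx).support ++ (p.dropUntil x hx).support.tail := by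
        rw [← hsup]; exact hz
      rcases List.mem_append.mp this with h' | h'
      · exact absurd h' hzn
      · exact List.mem_of_mem_tail h'




-- build_cycle
lemma build_cycle {u p q : V} {P : G.Walk p q} (hP : P.support.Nodup) (hu : u ∉ P.support)
    (hup : G.Adj u p) (hqu : G.Adj q u) (hpq : p ≠ q) :
    (cons hup (P.append (cons hqu nil))).IsCycle := by
  rw [cons_isCycle_iff]
  refine ⟨IsPath.mk' ?_, ?_⟩
  · rw [support_append]
    simp only [support_cons, support_nil, List.tail_cons]
    rw [List.nodup_append]
    refine ⟨hP, by simp, ?_⟩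
    intro a ha b hb hab; simp only [List.mem_singleton] at hb; subst hb; subst hab
    exact hu ha
  · intro hmem
    rw [edges_append] at hmem
    rcases List.mem_append.mp hmem with h' | h'
    · exact hu (P.fst_mem_support_of_mem_edges h')
    · simp only [edges_cons, edges_nil, List.mem_singleton] at h'
      rw [Sym2.eq_iff] at h'
      rcases h' with ⟨h1, h2⟩ | ⟨h1, rfl⟩
      · exact hu (h1 ▸ P.end_mem_support)
      · exact hpq rfl

lemma build_cycle_support {u p q x : V} {P : G.Walk p q} (hup : G.Adj u p) (hqu : G.Adj q u) :
    x ∈ (cons hup (P.append (cons hqu nil))).support ↔ x = u ∨ x ∈ P.support := by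
  rw [support_cons, List.mem_cons, mem_support_append_iff]
  constructor
  · rintro (rfl | h | h)
    · exact Or.inl rfl
    · exact Or.inr h
    · simp only [support_cons, support_nil, List.mem_cons, List.not_mem_nil, or_false] at h
      rcases h with rfl | rfl
      · exact Or.inr P.end_mem_support
      · exact Or.inl rfl
  · rintro (rfl | h)
    · exact Or.inl rfl
    · exact Or.inr (Or.inl h)

lemma build_cycle_length {u p q : V} {P : G.Walk p q} (hup : G.Adj u p) (hqu : G.Adj q u) :
    (cons hup (P.append (cons hqu nil))).length = P.length + 2 := by
  simp [length_append]

-- toInduce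
def toInduce {s : Set V} : ∀ {a b : V} (p : G.Walk a b) (hs : ∀ x ∈ p.support, x ∈ s),
    (G.induce s).Walk ⟨a, hs a p.start_mem_support⟩ ⟨b, hs b p.end_mem_support⟩
  | _, _, nil, _ => nil
  | _, _, cons h p, hs =>
      cons (by exact h) (p.toInduce (fun x hx => hs x (by simp [hx])))

def induceHomVal {s : Set V} : G.induce s →g G := ⟨Subtype.val, fun h => h⟩

lemma map_toInduce {s : Set V} {a b : V} (p : G.Walk a b) (hs : ∀ x ∈ p.support, x ∈ s) :
    (p.toInduce hs).map induceHomVal = p := by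
  induction p with
  | nil => rfl
  | cons h p ih => exact congrArg (cons h) (ih _)

lemma toInduce_isCycle {s : Set V} {a : V} (p : G.Walk a a) (hs : ∀ x ∈ p.support, x ∈ s)
    (hp : p.IsCycle) : (p.toInduce hs).IsCycle := by
  rw [← map_isCycle_iff_of_injective (f := induceHomVal) Subtype.val_injective]
  rw [map_toInduce]
  exact hp

lemma toInduce_length {s : Set V} {a b : V} (p : G.Walk a b) (hs : ∀ x ∈ p.support, x ∈ s) :
    (p.toInduce hs).length = p.length := by
  conv_rhs => rw [← map_toInduce p hs]
  exact (length_map _ _).symm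

lemma mem_toInduce_support {s : Set V} {a b : V} (p : G.Walk a b)
    (hs : ∀ x ∈ p.support, x ∈ s) (x : s) (hx : x ∈ (p.toInduce hs).support) :
    (x : V) ∈ p.support := by
  have e : p.support = ((p.toInduce hs).map induceHomVal).support := by rw [map_toInduce]; rfl
  rw [e, support_map]
  exact List.mem_map.mpr ⟨x, hx, rfl⟩

-- rotate facts
lemma length_rotate' {u v : V} (c : G.Walk v v) (h : u ∈ c.support) :
    (c.rotate u h).length = c.length := by
  have h1 : (c.takeUntil u h).length + (c.dropUntil u h).length = c.length := by
    have := congr_arg Walk.length (c.take_spec h)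
    rwa [length_append] at this
  have h2 : (c.rotate u h).length
      = (c.dropUntil u h).length + (c.takeUntil u h).length := by
    rw [rotate, length_append]
  omega

lemma mem_support_rotate_iff' {u v x : V} (c : G.Walk v v) (h : u ∈ c.support) :
    x ∈ (c.rotate u h).support ↔ x ∈ c.support := by
  rw [rotate, mem_support_append_iff]
  constructor
  · rintro (h' | h')
    · exact support_dropUntil_subset _ _ h'
    · exact support_takeUntil_subset _ _ h'
  · intro h'
    have : x ∈ ((c.takeUntil u h).append (c.dropUntil u h)).support := by
      rw [c.take_spec h]; exact h'
    rw [mem_support_append_iff] at this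
    tauto

lemma exists_eq_cons_of_ne_nil' {v : V} (p : G.Walk v v) (hp : p ≠ nil) :
    ∃ (x : V) (h : G.Adj v x) (q : G.Walk x v), p = cons h q := by
  cases p with
  | nil => exact absurd rfl hp
  | cons h q => exact ⟨_, h, q, rfl⟩



lemma takeUntil_pi {v w : V} (p : G.Walk v w) (z : V) (h₁ h₂ : z ∈ p.support) :
    p.takeUntil z h₁ = p.takeUntil z h₂ := rfl

lemma length_seg {v y a b : V} {p : G.Walk v y}
    (ha : a ∈ p.support) (hb : b ∈ p.support)
    (ham : a ∈ (p.takeUntil b hb).support) :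
    ((p.takeUntil b hb).dropUntil a ham).length
      = (p.takeUntil b hb).length - (p.takeUntil a ha).length := by
  have e := takeUntil_takeUntil' p hb ham
  have h1 := length_takeUntil_add_dropUntil (p.takeUntil b hb) ham
  rw [e, takeUntil_pi p a _ ha] at h1
  have h2 : (p.takeUntil a ha).length ≤ (p.takeUntil b hb).length :=
    (mem_support_takeUntil_iff_le p hb ha).mp ham
  omega

lemma seg_support_pos {v y a b z : V} {p : G.Walk v y} (hp : p.IsPath) (ha : a ∈ p.support)
    (hb : b ∈ p.support) (ham : a ∈ (p.takeUntil b hb).support)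
    (hz : z ∈ p.support)
    (hzs : z ∈ ((p.takeUntil b hb).dropUntil a ham).support) :
    (p.takeUntil a ha).length ≤ (p.takeUntil z hz).length ∧
      (p.takeUntil z hz).length ≤ (p.takeUntil b hb).length := by
  have hz' : z ∈ (p.takeUntil b hb).support := support_dropUntil_subset _ _ hzs
  have h2 : (p.takeUntil z hz).length ≤ (p.takeUntil b hb).length := by
    have := (mem_support_takeUntil_iff_le p hb hz).mp hz'
    exact this
  have hP' : (p.takeUntil b hb).IsPath := hp.takeUntil _
  have h3 := (mem_support_dropUntil_iff hP' ham hz').mp hzs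
  rw [takeUntil_takeUntil' p hb ham, takeUntil_takeUntil' p hb hz',
    takeUntil_pi p a _ ha, takeUntil_pi p z _ hz] at h3
  exact ⟨h3, h2⟩

lemma exists_induced_pair {s : Set V} {x z : V} {N : ℕ} (C : G.Walk x x) (D : G.Walk z z)
    (hC : C.IsCycle) (hD : D.IsCycle)
    (hCs : ∀ t ∈ C.support, t ∈ s) (hDs : ∀ t ∈ D.support, t ∈ s)
    (hdisj : ∀ t ∈ C.support, t ∉ D.support) (hN : C.length + D.length < N) :
    ∃ (a b : s) (d₁ : (G.induce s).Walk a a) (d₂ : (G.induce s).Walk b b),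
      d₁.IsCycle ∧ d₂.IsCycle ∧ (∀ u, u ∈ d₁.support → u ∉ d₂.support) ∧
      d₁.length + d₂.length < N := by
  refine ⟨⟨x, hCs x C.start_mem_support⟩, ⟨z, hDs z D.start_mem_support⟩,
    C.toInduce hCs, D.toInduce hDs, toInduce_isCycle C hCs hC, toInduce_isCycle D hDs hD,
    ?_, ?_⟩
  · intro t ht1 ht2
    exact hdisj t (mem_toInduce_support C hCs t ht1) (mem_toInduce_support D hDs t ht2)
  · rw [toInduce_length, toInduce_length]
    exact hN

end SimpleGraph.Walk

open SimpleGraph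

/-- Lemma 8(i): if `C₂` (of length at least 6) has vertices with degree sequence `(5, 3)` to `C₁`, then `G[V(C₁) ∪ V(C₂)]` has two disjoint cycles of smaller total length. -/
theorem shorter_two_cycles_14 {V : Type*} [Fintype V] [DecidableEq V]
    (G : SimpleGraph V)
    (v₁ v₂ : V) (c₁ : G.Walk v₁ v₁) (c₂ : G.Walk v₂ v₂)
    (hc₁ : c₁.IsCycle) (hc₂ : c₂.IsCycle)
    (hdisj : ∀ u ∈ c₁.support, u ∉ c₂.support)
    (hlen : 6 ≤ c₂.length)
    (u w : V) (huC : u ∈ c₂.support) (hwC : w ∈ c₂.support) (huw : u ≠ w)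
    (hu : 5 ≤ {s | s ∈ c₁.support ∧ G.Adj u s}.ncard)
    (hw : 3 ≤ {s | s ∈ c₁.support ∧ G.Adj w s}.ncard) :
    ∃ (a b : ↥({s | s ∈ c₁.support} ∪ {s | s ∈ c₂.support}))
      (d₁ : (G.induce ({s | s ∈ c₁.support} ∪ {s | s ∈ c₂.support})).Walk a a)
      (d₂ : (G.induce ({s | s ∈ c₁.support} ∪ {s | s ∈ c₂.support})).Walk b b),
      d₁.IsCycle ∧ d₂.IsCycle ∧
      (∀ u, u ∈ d₁.support → u ∉ d₂.support) ∧
      d₁.length + d₂.length < c₁.length + c₂.length := by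
  classical
  -- pick y, a neighbour of w on c₁
  have hS₂ne : {x | x ∈ c₁.support ∧ G.Adj w x}.Nonempty := by
    rw [← Set.ncard_pos (Set.toFinite _)]; omega
  obtain ⟨y, hyc, hwy⟩ := hS₂ne
  -- rotate c₁ at y and split off the first edge
  have hRcyc : (c₁.rotate y hyc).IsCycle := hc₁.rotate hyc
  obtain ⟨x₀, hadj, T, hRT⟩ := (c₁.rotate y hyc).exists_eq_cons_of_ne_nil' hRcyc.ne_nil
  have hTpath : T.IsPath := by
    have h2 := hRcyc
    rw [hRT, Walk.isCycle_def] at h2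
    refine Walk.IsPath.mk' ?_
    simpa using h2.2.2
  have hTc₁ : ∀ x, x ∈ T.support → x ∈ c₁.support := by
    intro x hx
    have : x ∈ (c₁.rotate y hyc).support := by rw [hRT]; simp [hx]
    rwa [Walk.mem_support_rotate_iff'] at this
  have hc₁T : ∀ x, x ∈ c₁.support → x ∈ T.support := by
    intro x hx
    have h3 : x ∈ (c₁.rotate y hyc).support := (Walk.mem_support_rotate_iff' _ _).mpr hx
    rw [hRT, Walk.support_cons, List.mem_cons] at h3
    rcases h3 with rfl | h3
    · exact T.end_mem_support
    · exact h3
  have hyT : y ∈ T.support := T.end_mem_support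
  have hMT : T.length + 1 = c₁.length := by
    have h4 := Walk.length_rotate' c₁ hyc
    rw [hRT] at h4
    simpa using h4
  have hL3 : 3 ≤ c₁.length := hc₁.three_le_length
  have huc₁ : u ∉ c₁.support := fun h => hdisj u h huC
  have hwc₁ : w ∉ c₁.support := fun h => hdisj w h hwC
  have huT : u ∉ T.support := fun h => huc₁ (hTc₁ _ h)
  have hwT : w ∉ T.support := fun h => hwc₁ (hTc₁ _ h)
  have hposy : (T.takeUntil y hyT).length = T.length :=
    Walk.length_takeUntil_end hTpath hyT
  -- choose the two other neighbours y₂ y₃ of w, ordered by position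
  obtain ⟨y₂, y₃, hy₂T, hy₃T, hwy₂, hwy₃, hy₂y, hy₃y, hy₂y₃, horder⟩ :
      ∃ (y₂ y₃ : V) (hy₂T : y₂ ∈ T.support) (hy₃T : y₃ ∈ T.support),
        G.Adj w y₂ ∧ G.Adj w y₃ ∧ y₂ ≠ y ∧ y₃ ≠ y ∧ y₂ ≠ y₃ ∧
        (T.takeUntil y₂ hy₂T).length < (T.takeUntil y₃ hy₃T).length := by
    have hcard : 1 < ({x | x ∈ c₁.support ∧ G.Adj w x} \ {y}).ncard := by
      have := Set.ncard_diff_singleton_add_one (show y ∈ {x | x ∈ c₁.support ∧ G.Adj w x}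
        from ⟨hyc, hwy⟩) (Set.toFinite _)
      omega
    obtain ⟨z₁, z₂, hz₁, hz₂, hz12⟩ := (Set.one_lt_ncard_iff (Set.toFinite _)).mp hcard
    obtain ⟨⟨hz₁c, hz₁w⟩, hz₁y⟩ := hz₁
    obtain ⟨⟨hz₂c, hz₂w⟩, hz₂y⟩ := hz₂
    have hz₁T := hc₁T _ hz₁c
    have hz₂T := hc₁T _ hz₂c
    have hne : (T.takeUntil z₁ hz₁T).length ≠ (T.takeUntil z₂ hz₂T).length := by
      intro h
      exact hz12 (Walk.eq_of_length_takeUntil_eq T hz₂T hz₁T h)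
    rcases lt_or_gt_of_ne hne with h | h
    · exact ⟨z₁, z₂, hz₁T, hz₂T, hz₁w, hz₂w, by simpa using hz₁y, by simpa using hz₂y,
        hz12, h⟩
    · exact ⟨z₂, z₁, hz₂T, hz₁T, hz₂w, hz₁w, by simpa using hz₂y, by simpa using hz₁y,
        hz12.symm, h⟩
  -- choose two neighbours p q of u avoiding y, y₂, y₃, ordered by position
  obtain ⟨p, q, hpT, hqT, hup, huq, hpy, hqy, hpy₂, hqy₂, hpy₃, hqy₃, hpq, hporder⟩ :
      ∃ (p q : V) (hpT : p ∈ T.support) (hqT : q ∈ T.support),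
        G.Adj u p ∧ G.Adj u q ∧ p ≠ y ∧ q ≠ y ∧ p ≠ y₂ ∧ q ≠ y₂ ∧ p ≠ y₃ ∧ q ≠ y₃ ∧
        p ≠ q ∧ (T.takeUntil p hpT).length < (T.takeUntil q hqT).length := by
    have hsub : {x | x ∈ c₁.support ∧ G.Adj u x} ⊆
        ({x | x ∈ c₁.support ∧ G.Adj u x} \ {y, y₂, y₃}) ∪ {y, y₂, y₃} := by
      intro x hx
      by_cases h : x ∈ ({y, y₂, y₃} : Set V)
      · exact Or.inr h
      · exact Or.inl ⟨hx, h⟩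
    have h5 : ({y, y₂, y₃} : Set V).ncard ≤ 3 := by
      calc ({y, y₂, y₃} : Set V).ncard ≤ ({y₂, y₃} : Set V).ncard + 1 :=
            Set.ncard_insert_le _ _
        _ ≤ (({y₃} : Set V).ncard + 1) + 1 := by
            have := Set.ncard_insert_le y₂ ({y₃} : Set V); omega
        _ ≤ 3 := by rw [Set.ncard_singleton]
    have hcard : 1 < ({x | x ∈ c₁.support ∧ G.Adj u x} \ {y, y₂, y₃}).ncard := by
      have h6 := Set.ncard_le_ncard hsub (Set.toFinite _)
      have h7 := Set.ncard_union_le ({x | x ∈ c₁.support ∧ G.Adj u x} \ {y, y₂, y₃})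
        ({y, y₂, y₃} : Set V)
      omega
    obtain ⟨z₁, z₂, hz₁, hz₂, hz12⟩ := (Set.one_lt_ncard_iff (Set.toFinite _)).mp hcard
    obtain ⟨⟨hz₁c, hz₁w⟩, hz₁y⟩ := hz₁
    obtain ⟨⟨hz₂c, hz₂w⟩, hz₂y⟩ := hz₂
    simp only [Set.mem_insert_iff, Set.mem_singleton_iff, not_or] at hz₁y hz₂y
    have hz₁T := hc₁T _ hz₁c
    have hz₂T := hc₁T _ hz₂c
    have hne : (T.takeUntil z₁ hz₁T).length ≠ (T.takeUntil z₂ hz₂T).length := by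
      intro h
      exact hz12 (Walk.eq_of_length_takeUntil_eq T hz₂T hz₁T h)
    rcases lt_or_gt_of_ne hne with h | h
    · exact ⟨z₁, z₂, hz₁T, hz₂T, hz₁w, hz₂w, hz₁y.1, hz₂y.1, hz₁y.2.1, hz₂y.2.1,
        hz₁y.2.2, hz₂y.2.2, hz12, h⟩
    · exact ⟨z₂, z₁, hz₂T, hz₁T, hz₂w, hz₁w, hz₂y.1, hz₁y.1, hz₂y.2.1, hz₁y.2.1,
        hz₂y.2.2, hz₁y.2.2, hz12.symm, h⟩
  -- abbreviations for positions
  have hqa_lt : (T.takeUntil q hqT).length < T.length := Walk.length_takeUntil_lt' T hqT hqy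
  have hpa_lt : (T.takeUntil p hpT).length < T.length := Walk.length_takeUntil_lt' T hpT hpy
  have ha_lt : (T.takeUntil y₂ hy₂T).length < T.length := Walk.length_takeUntil_lt' T hy₂T hy₂y
  have hb_lt : (T.takeUntil y₃ hy₃T).length < T.length := Walk.length_takeUntil_lt' T hy₃T hy₃y
  have hpa_ne_a : (T.takeUntil p hpT).length ≠ (T.takeUntil y₂ hy₂T).length :=
    fun h => hpy₂ (Walk.eq_of_length_takeUntil_eq T hy₂T hpT h)
  have hpa_ne_b : (T.takeUntil p hpT).length ≠ (T.takeUntil y₃ hy₃T).length :=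
    fun h => hpy₃ (Walk.eq_of_length_takeUntil_eq T hy₃T hpT h)
  have hqa_ne_a : (T.takeUntil q hqT).length ≠ (T.takeUntil y₂ hy₂T).length :=
    fun h => hqy₂ (Walk.eq_of_length_takeUntil_eq T hy₂T hqT h)
  have hqa_ne_b : (T.takeUntil q hqT).length ≠ (T.takeUntil y₃ hy₃T).length :=
    fun h => hqy₃ (Walk.eq_of_length_takeUntil_eq T hy₃T hqT h)
  have huy : u ≠ y := fun h => huc₁ (h ▸ hyc)
  have hwyne : w ≠ y := fun h => hwc₁ (h ▸ hyc)
  -- the first cycle in cases B and C : u together with the segment from p to q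
  have hpmem : p ∈ (T.takeUntil q hqT).support :=
    (Walk.mem_support_takeUntil_iff_le T hqT hpT).mpr hporder.le
  have hSgpath : ((T.takeUntil q hqT).dropUntil p hpmem).IsPath :=
    (hTpath.takeUntil hqT).dropUntil hpmem
  have hSgsub : ∀ x ∈ ((T.takeUntil q hqT).dropUntil p hpmem).support, x ∈ T.support :=
    fun x hx => Walk.support_takeUntil_subset _ _ (Walk.support_dropUntil_subset _ _ hx)
  have hSgpos : ∀ x (hxT : x ∈ T.support), x ∈ ((T.takeUntil q hqT).dropUntil p hpmem).support →
      (T.takeUntil p hpT).length ≤ (T.takeUntil x hxT).length ∧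
      (T.takeUntil x hxT).length ≤ (T.takeUntil q hqT).length :=
    fun x hxT hx => Walk.seg_support_pos hTpath hpT hqT hpmem hxT hx
  have hSglen : ((T.takeUntil q hqT).dropUntil p hpmem).length
      = (T.takeUntil q hqT).length - (T.takeUntil p hpT).length :=
    Walk.length_seg hpT hqT hpmem
  have huSg : u ∉ ((T.takeUntil q hqT).dropUntil p hpmem).support := fun h => huT (hSgsub _ h)
  have hwSg : w ∉ ((T.takeUntil q hqT).dropUntil p hpmem).support := fun h => hwT (hSgsub _ h)
  have hCcyc : (Walk.cons hup (((T.takeUntil q hqT).dropUntil p hpmem).append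
      (Walk.cons huq.symm Walk.nil))).IsCycle :=
    Walk.build_cycle hSgpath.support_nodup huSg hup huq.symm hpq
  have hCsup : ∀ t, t ∈ (Walk.cons hup (((T.takeUntil q hqT).dropUntil p hpmem).append
      (Walk.cons huq.symm Walk.nil))).support ↔
      t = u ∨ t ∈ ((T.takeUntil q hqT).dropUntil p hpmem).support :=
    fun t => Walk.build_cycle_support hup huq.symm
  have hCmem : ∀ t, (t = u ∨ t ∈ ((T.takeUntil q hqT).dropUntil p hpmem).support) →
      t ∈ ({x | x ∈ c₁.support} ∪ {x | x ∈ c₂.support} : Set V) := by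
    rintro t (rfl | ht)
    · exact Or.inr huC
    · exact Or.inl (hTc₁ _ (hSgsub _ ht))
  have hClen : (Walk.cons hup (((T.takeUntil q hqT).dropUntil p hpmem).append
      (Walk.cons huq.symm Walk.nil))).length
      = ((T.takeUntil q hqT).dropUntil p hpmem).length + 2 :=
    Walk.build_cycle_length _ _
  by_cases hcase1 : (T.takeUntil q hqT).length < (T.takeUntil y₃ hy₃T).length
  · -- Case C : both p,q before y₃; second cycle w + (segment y₃ → y)
    have hDpath : (T.dropUntil y₃ hy₃T).IsPath := hTpath.dropUntil hy₃T
    have hwD : w ∉ (T.dropUntil y₃ hy₃T).support :=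
      fun h => hwT (Walk.support_dropUntil_subset _ _ h)
    have hDcyc : (Walk.cons hwy₃ ((T.dropUntil y₃ hy₃T).append
        (Walk.cons hwy.symm Walk.nil))).IsCycle :=
      Walk.build_cycle hDpath.support_nodup hwD hwy₃ hwy.symm hy₃y
    have hDlen0 : (T.takeUntil y₃ hy₃T).length + (T.dropUntil y₃ hy₃T).length = T.length :=
      Walk.length_takeUntil_add_dropUntil T hy₃T
    refine Walk.exists_induced_pair _ _ hCcyc hDcyc
      (fun t ht => hCmem t ((hCsup t).mp ht)) ?_ ?_ ?_
    · intro t ht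
      rcases (Walk.build_cycle_support hwy₃ hwy.symm).mp ht with rfl | ht'
      · exact Or.inr hwC
      · exact Or.inl (hTc₁ _ (Walk.support_dropUntil_subset _ _ ht'))
    · intro t htC htD
      rcases (hCsup t).mp htC with rfl | htC'
      · rcases (Walk.build_cycle_support hwy₃ hwy.symm).mp htD with h | h
        · exact huw h
        · exact huT (Walk.support_dropUntil_subset _ _ h)
      · rcases (Walk.build_cycle_support hwy₃ hwy.symm).mp htD with rfl | h
        · exact hwSg htC'
        · have htT : t ∈ T.support := hSgsub _ htC'
          have h1 := (hSgpos t htT htC').2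
          have h2 := (Walk.mem_support_dropUntil_iff hTpath hy₃T htT).mp h
          omega
    · rw [hClen, Walk.build_cycle_length]
      omega
  · by_cases hcase2 : (T.takeUntil y₂ hy₂T).length < (T.takeUntil p hpT).length
    · -- Case B : both p,q after y₂; second cycle w + y + (segment start → y₂)
      have hyA : y ∉ (T.takeUntil y₂ hy₂T).support := by
        intro h
        have := (Walk.mem_support_takeUntil_iff_le T hy₂T hyT).mp h
        rw [hposy] at this
        omega
      have hArcnodup : (Walk.cons hadj (T.takeUntil y₂ hy₂T)).support.Nodup := by
        rw [Walk.support_cons]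
        exact List.nodup_cons.mpr ⟨hyA, (hTpath.takeUntil hy₂T).support_nodup⟩
      have hwArc : w ∉ (Walk.cons hadj (T.takeUntil y₂ hy₂T)).support := by
        rw [Walk.support_cons, List.mem_cons]
        rintro (rfl | h)
        · exact hwc₁ hyc
        · exact hwT (Walk.support_takeUntil_subset _ _ h)
      have hDcyc : (Walk.cons hwy ((Walk.cons hadj (T.takeUntil y₂ hy₂T)).append
          (Walk.cons hwy₂.symm Walk.nil))).IsCycle :=
        Walk.build_cycle hArcnodup hwArc hwy hwy₂.symm (Ne.symm hy₂y)
      refine Walk.exists_induced_pair _ _ hCcyc hDcyc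
        (fun t ht => hCmem t ((hCsup t).mp ht)) ?_ ?_ ?_
      · intro t ht
        rcases (Walk.build_cycle_support hwy (hwy₂.symm)).mp ht with rfl | ht'
        · exact Or.inr hwC
        · rw [Walk.support_cons, List.mem_cons] at ht'
          rcases ht' with rfl | ht''
          · exact Or.inl hyc
          · exact Or.inl (hTc₁ _ (Walk.support_takeUntil_subset _ _ ht''))
      · intro t htC htD
        rcases (hCsup t).mp htC with rfl | htC'
        · rcases (Walk.build_cycle_support hwy (hwy₂.symm)).mp htD with h | h
          · exact huw h
          · rw [Walk.support_cons, List.mem_cons] at h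
            rcases h with rfl | h'
            · exact huc₁ hyc
            · exact huT (Walk.support_takeUntil_subset _ _ h')
        · rcases (Walk.build_cycle_support hwy (hwy₂.symm)).mp htD with rfl | h
          · exact hwSg htC'
          · rw [Walk.support_cons, List.mem_cons] at h
            have htT : t ∈ T.support := hSgsub _ htC'
            rcases h with rfl | h'
            · have h1 := (hSgpos t htT htC').2
              rw [Walk.takeUntil_pi T t htT hyT, hposy] at h1
              omega
            · have h1 := (hSgpos t htT htC').1
              have h2 := (Walk.mem_support_takeUntil_iff_le T hy₂T htT).mp h'
              omega
      · rw [hClen, Walk.build_cycle_length, Walk.length_cons]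
        omega
    · -- Case A : p before y₂ and q after y₃
      have hpa_a : (T.takeUntil p hpT).length < (T.takeUntil y₂ hy₂T).length := by omega
      have hqa_b : (T.takeUntil y₃ hy₃T).length < (T.takeUntil q hqT).length := by omega
      -- second cycle : w + segment y₂ → y₃
      have hy₂mem : y₂ ∈ (T.takeUntil y₃ hy₃T).support :=
        (Walk.mem_support_takeUntil_iff_le T hy₃T hy₂T).mpr horder.le
      have hDpath : ((T.takeUntil y₃ hy₃T).dropUntil y₂ hy₂mem).IsPath :=
        (hTpath.takeUntil hy₃T).dropUntil hy₂mem
      have hDsub : ∀ x ∈ ((T.takeUntil y₃ hy₃T).dropUntil y₂ hy₂mem).support, x ∈ T.support :=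
        fun x hx => Walk.support_takeUntil_subset _ _ (Walk.support_dropUntil_subset _ _ hx)
      have hDpos : ∀ x (hxT : x ∈ T.support),
          x ∈ ((T.takeUntil y₃ hy₃T).dropUntil y₂ hy₂mem).support →
          (T.takeUntil y₂ hy₂T).length ≤ (T.takeUntil x hxT).length ∧
          (T.takeUntil x hxT).length ≤ (T.takeUntil y₃ hy₃T).length :=
        fun x hxT hx => Walk.seg_support_pos hTpath hy₂T hy₃T hy₂mem hxT hx
      have hwDSg : w ∉ ((T.takeUntil y₃ hy₃T).dropUntil y₂ hy₂mem).support :=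
        fun h => hwT (hDsub _ h)
      have hDcyc : (Walk.cons hwy₂ (((T.takeUntil y₃ hy₃T).dropUntil y₂ hy₂mem).append
          (Walk.cons hwy₃.symm Walk.nil))).IsCycle :=
        Walk.build_cycle hDpath.support_nodup hwDSg hwy₂ hwy₃.symm hy₂y₃
      -- first cycle : u + (q → y) + edge (y,x₀) + (start → p)
      have hWnodup : ((T.dropUntil q hqT).append
          (Walk.cons hadj (T.takeUntil p hpT))).support.Nodup := by
        rw [Walk.support_append, Walk.support_cons, List.tail_cons]
        refine List.nodup_append.mpr ⟨(hTpath.dropUntil hqT).support_nodup,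
          (hTpath.takeUntil hpT).support_nodup, ?_⟩
        intro t ht1 t' ht2 htt; subst htt
        have htT : t ∈ T.support := Walk.support_dropUntil_subset _ _ ht1
        have h1 := (Walk.mem_support_dropUntil_iff hTpath hqT htT).mp ht1
        have h2 := (Walk.mem_support_takeUntil_iff_le T hpT htT).mp ht2
        omega
      have hWsub : ∀ t ∈ ((T.dropUntil q hqT).append
          (Walk.cons hadj (T.takeUntil p hpT))).support, t ∈ T.support := by
        intro t ht
        rw [Walk.mem_support_append_iff] at ht
        rcases ht with h | h
        · exact Walk.support_dropUntil_subset _ _ h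
        · rw [Walk.support_cons, List.mem_cons] at h
          rcases h with rfl | h'
          · exact hyT
          · exact Walk.support_takeUntil_subset _ _ h'
      have huW : u ∉ ((T.dropUntil q hqT).append
          (Walk.cons hadj (T.takeUntil p hpT))).support := fun h => huT (hWsub _ h)
      have hC2cyc : (Walk.cons huq (((T.dropUntil q hqT).append
          (Walk.cons hadj (T.takeUntil p hpT))).append
          (Walk.cons hup.symm Walk.nil))).IsCycle :=
        Walk.build_cycle hWnodup huW huq hup.symm (Ne.symm hpq)
      have hdq : (T.takeUntil q hqT).length + (T.dropUntil q hqT).length = T.length :=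
        Walk.length_takeUntil_add_dropUntil T hqT
      refine Walk.exists_induced_pair _ _ hC2cyc hDcyc ?_ ?_ ?_ ?_
      · intro t ht
        rcases (Walk.build_cycle_support huq hup.symm).mp ht with rfl | ht'
        · exact Or.inr huC
        · exact Or.inl (hTc₁ _ (hWsub _ ht'))
      · intro t ht
        rcases (Walk.build_cycle_support hwy₂ hwy₃.symm).mp ht with rfl | ht'
        · exact Or.inr hwC
        · exact Or.inl (hTc₁ _ (hDsub _ ht'))
      · intro t htC htD
        rcases (Walk.build_cycle_support huq hup.symm).mp htC with rfl | htC'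
        · rcases (Walk.build_cycle_support hwy₂ hwy₃.symm).mp htD with h | h
          · exact huw h
          · exact huT (hDsub _ h)
        · rcases (Walk.build_cycle_support hwy₂ hwy₃.symm).mp htD with rfl | h
          · exact hwT (hWsub _ htC')
          · have htT : t ∈ T.support := hWsub _ htC'
            have hD1 := (hDpos t htT h).1
            have hD2 := (hDpos t htT h).2
            rw [Walk.mem_support_append_iff] at htC'
            rcases htC' with h' | h'
            · have h1 := (Walk.mem_support_dropUntil_iff hTpath hqT htT).mp h'
              omega
            · rw [Walk.support_cons, List.mem_cons] at h'
              rcases h' with rfl | h''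
              · rw [Walk.takeUntil_pi T t htT hyT, hposy] at hD2
                omega
              · have h1 := (Walk.mem_support_takeUntil_iff_le T hpT htT).mp h''
                omega
      · rw [Walk.build_cycle_length, Walk.build_cycle_length, Walk.length_append,
          Walk.length_cons, Walk.length_seg hy₂T hy₃T hy₂mem]
        have hqle : (T.takeUntil q hqT).length ≤ T.length := Walk.length_takeUntil_le _ _
        omega
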